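/- arXiv:1305.0944 — 5 statements merged into one kernel-verified Lean document; each statement's English description precedes it below -/
import Mathlib

section
/- Let k be a field and (V, μ, e) a k-vector space with a bilinear multiplication μ : V ⊗ V → V and an element e ∈ V satisfying μ(e ⊗ v) = μ(v ⊗ e) = v for all v ∈ V. Define the linear map σ : V ⊗ V → V ⊗ V by σ(v ⊗ w) = e ⊗ μ(v ⊗ w). Then σ satisfies the Yang–Baxter equation (σ ⊗ id_V)∘(id_V ⊗ σ)∘(σ ⊗ id_V) = (id_V ⊗ σ)∘(σ ⊗ id_V)∘(id_V ⊗ σ) on V ⊗ V ⊗ V if and only if μ is associative, i.e. μ(μ(a ⊗ b) ⊗ c) = μ(a ⊗ μ(b ⊗ c)) for all a, b, c ∈ V. -/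
open TensorProduct

/-- The colored Yang–Baxter equation on `X ⊗ Y ⊗ Z` for braiding components
`cXY : X ⊗ Y → Y ⊗ X`, `cXZ : X ⊗ Z → Z ⊗ X`, `cYZ : Y ⊗ Z → Z ⊗ Y`:
`(cYZ ⊗ id_X) ∘ (id_Y ⊗ cXZ) ∘ (cXY ⊗ id_Z) = (id_Z ⊗ cXY) ∘ (cXZ ⊗ id_Y) ∘ (id_X ⊗ cYZ)`,
written with the canonical associators. -/
def ColoredYBE (k : Type*) [CommRing k]
    (X Y Z : Type*) [AddCommGroup X] [Module k X] [AddCommGroup Y] [Module k Y]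
    [AddCommGroup Z] [Module k Z]
    (cXY : X ⊗[k] Y →ₗ[k] Y ⊗[k] X) (cXZ : X ⊗[k] Z →ₗ[k] Z ⊗[k] X)
    (cYZ : Y ⊗[k] Z →ₗ[k] Z ⊗[k] Y) : Prop :=
  (TensorProduct.assoc k Z Y X).toLinearMap
      ∘ₗ (cYZ.rTensor X)
      ∘ₗ (TensorProduct.assoc k Y Z X).symm.toLinearMap
      ∘ₗ (cXZ.lTensor Y)
      ∘ₗ (TensorProduct.assoc k Y X Z).toLinearMap
      ∘ₗ (cXY.rTensor Z)
      ∘ₗ (TensorProduct.assoc k X Y Z).symm.toLinearMap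
    = (cXY.lTensor Z)
      ∘ₗ (TensorProduct.assoc k Z X Y).toLinearMap
      ∘ₗ (cXZ.rTensor Y)
      ∘ₗ (TensorProduct.assoc k X Z Y).symm.toLinearMap
      ∘ₗ (cYZ.lTensor X)

/-- The associativity braiding `σ(v ⊗ w) = e ⊗ μ(v ⊗ w)` satisfies the Yang–Baxter
equation if and only if `μ` is associative. -/
theorem associativity_braiding_ybe_iff_assoc
    (k V : Type*) [Field k] [AddCommGroup V] [Module k V]
    (μ : V ⊗[k] V →ₗ[k] V) (e : V)
    (he_left : ∀ v : V, μ (e ⊗ₜ[k] v) = v) (he_right : ∀ v : V, μ (v ⊗ₜ[k] e) = v) :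
    ColoredYBE k V V V
        ((TensorProduct.mk k V V e) ∘ₗ μ)
        ((TensorProduct.mk k V V e) ∘ₗ μ)
        ((TensorProduct.mk k V V e) ∘ₗ μ)
      ↔ ∀ a b c : V, μ (μ (a ⊗ₜ[k] b) ⊗ₜ[k] c) = μ (a ⊗ₜ[k] μ (b ⊗ₜ[k] c)) := by
  constructor
  · intro h a b c
    have h1 := LinearMap.congr_fun h (a ⊗ₜ[k] (b ⊗ₜ[k] c))
    simp only [ColoredYBE, LinearMap.coe_comp, Function.comp_apply,
      LinearEquiv.coe_coe, TensorProduct.assoc_symm_tmul, TensorProduct.assoc_tmul,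
      LinearMap.rTensor_tmul, LinearMap.lTensor_tmul, TensorProduct.mk_apply] at h1
    have h2 := congrArg (μ ∘ₗ μ.lTensor V) h1
    simpa [he_left, he_right] using h2
  · intro h
    unfold ColoredYBE
    ext a b c
    simp [h a b c, he_right]
end

section
/- Let k be a field, A a unital associative k-algebra with unit 1, M a k-vector space, and ρ : M ⊗ A → M a linear map satisfying ρ(m ⊗ 1) = m for all m ∈ M. Let σ_Ass : A ⊗ A → A ⊗ A be the linear map a ⊗ b ↦ 1 ⊗ ab. Then the braided module condition ρ∘(ρ ⊗ id_A) = ρ∘(ρ ⊗ id_A)∘(id_M ⊗ σ_Ass) (as maps M ⊗ A ⊗ A → M) holds if and only if ρ is an associative right action, i.e. ρ(ρ(m ⊗ a) ⊗ b) = ρ(m ⊗ ab) for all m ∈ M and a, b ∈ A. -/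
open TensorProduct

/-- For a unital associative algebra `A`, a linear map `ρ : M ⊗ A → M` with `ρ(m ⊗ 1) = m`
satisfies the braided module condition for the associativity braiding
`σ_Ass(a ⊗ b) = 1 ⊗ ab` if and only if it is an associative right action of `A` on `M`. -/
theorem braided_module_iff_assoc_action
    (k A M : Type*) [Field k] [Ring A] [Algebra k A] [AddCommGroup M] [Module k M]
    (ρ : M ⊗[k] A →ₗ[k] M)
    (hunit : ∀ m : M, ρ (m ⊗ₜ[k] (1 : A)) = m) :
    (ρ ∘ₗ (ρ.rTensor A) ∘ₗ (TensorProduct.assoc k M A A).symm.toLinearMap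
        = ρ ∘ₗ (ρ.rTensor A) ∘ₗ (TensorProduct.assoc k M A A).symm.toLinearMap
            ∘ₗ (LinearMap.lTensor M ((TensorProduct.mk k A A 1) ∘ₗ (LinearMap.mul' k A))))
      ↔ ∀ (m : M) (a b : A), ρ (ρ (m ⊗ₜ[k] a) ⊗ₜ[k] b) = ρ (m ⊗ₜ[k] (a * b)) := by
  constructor
  · intro h m a b
    have := LinearMap.congr_fun h (m ⊗ₜ[k] (a ⊗ₜ[k] b))
    simpa [LinearMap.rTensor, hunit] using this
  · intro h
    ext m a b
    simp [LinearMap.rTensor, hunit, h]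
end

section
/- Let k be a field, A and B unital associative k-algebras, and ξ : A ⊗ B → B ⊗ A a linear map satisfying ξ(1_A ⊗ b) = b ⊗ 1_A and ξ(a ⊗ 1_B) = 1_B ⊗ a for all a ∈ A, b ∈ B. Define a bilinear multiplication on B ⊗ A by (b ⊗ a)(b' ⊗ a') := (μ_B ⊗ μ_A)(b ⊗ ξ(a ⊗ b') ⊗ a'). Then this multiplication is associative (with two-sided unit 1_B ⊗ 1_A) if and only if ξ is natural with respect to both multiplications, i.e. ξ∘(μ_A ⊗ id_B) = (id_B ⊗ μ_A)∘(ξ ⊗ id_A)∘(id_A ⊗ ξ) as maps A ⊗ A ⊗ B → B ⊗ A, and ξ∘(id_A ⊗ μ_B) = (μ_B ⊗ id_A)∘(id_B ⊗ ξ)∘(ξ ⊗ id_B) as maps A ⊗ B ⊗ B → B ⊗ A. -/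
open TensorProduct

variable (k : Type*) [Field k]

/-- The multiplication of the twisted (braided) tensor product `Q ⊗_ξ P` of two
"algebras" `(P, μP)` and `(Q, μQ)` along a twisting map `ξ : P ⊗ Q → Q ⊗ P`:
`(q ⊗ p)(q' ⊗ p') = (μQ ⊗ μP)(q ⊗ ξ(p ⊗ q') ⊗ p')`. -/
noncomputable def twistMul {P Q : Type*} [AddCommGroup P] [Module k P]
    [AddCommGroup Q] [Module k Q]
    (μQ : Q ⊗[k] Q →ₗ[k] Q) (μP : P ⊗[k] P →ₗ[k] P)
    (ξ : P ⊗[k] Q →ₗ[k] Q ⊗[k] P) :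
    (Q ⊗[k] P) ⊗[k] (Q ⊗[k] P) →ₗ[k] Q ⊗[k] P :=
  (μQ.rTensor P)
    ∘ₗ (TensorProduct.assoc k Q Q P).symm.toLinearMap
    ∘ₗ (LinearMap.lTensor Q
          ((μP.lTensor Q)
            ∘ₗ (TensorProduct.assoc k Q P P).toLinearMap
            ∘ₗ (ξ.rTensor P)
            ∘ₗ (TensorProduct.assoc k P Q P).symm.toLinearMap))
    ∘ₗ (TensorProduct.assoc k Q P (Q ⊗[k] P)).toLinearMap

/-- Naturality of `ξ : P ⊗ Q → Q ⊗ P` with respect to a multiplication `μP` on `P`: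
`ξ ∘ (μP ⊗ id_Q) = (id_Q ⊗ μP) ∘ (ξ ⊗ id_P) ∘ (id_P ⊗ ξ)` on `P ⊗ P ⊗ Q`. -/
def NatFirst {P Q : Type*} [AddCommGroup P] [Module k P] [AddCommGroup Q] [Module k Q]
    (μP : P ⊗[k] P →ₗ[k] P) (ξ : P ⊗[k] Q →ₗ[k] Q ⊗[k] P) : Prop :=
  ξ ∘ₗ (μP.rTensor Q) ∘ₗ (TensorProduct.assoc k P P Q).symm.toLinearMap
    = (μP.lTensor Q)
      ∘ₗ (TensorProduct.assoc k Q P P).toLinearMap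
      ∘ₗ (ξ.rTensor P)
      ∘ₗ (TensorProduct.assoc k P Q P).symm.toLinearMap
      ∘ₗ (ξ.lTensor P)

/-- Naturality of `ξ : P ⊗ Q → Q ⊗ P` with respect to a multiplication `μQ` on `Q`:
`ξ ∘ (id_P ⊗ μQ) = (μQ ⊗ id_P) ∘ (id_Q ⊗ ξ) ∘ (ξ ⊗ id_Q)` on `P ⊗ Q ⊗ Q`. -/
def NatSecond {P Q : Type*} [AddCommGroup P] [Module k P] [AddCommGroup Q] [Module k Q]
    (μQ : Q ⊗[k] Q →ₗ[k] Q) (ξ : P ⊗[k] Q →ₗ[k] Q ⊗[k] P) : Prop :=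
  ξ ∘ₗ (μQ.lTensor P)
    = (μQ.rTensor P)
      ∘ₗ (TensorProduct.assoc k Q Q P).symm.toLinearMap
      ∘ₗ (ξ.lTensor Q)
      ∘ₗ (TensorProduct.assoc k Q P Q).toLinearMap
      ∘ₗ (ξ.rTensor Q)
      ∘ₗ (TensorProduct.assoc k P Q Q).symm.toLinearMap

section Aux

variable {A B : Type*} [Ring A] [Algebra k A] [Ring B] [Algebra k B]
  (ξ : A ⊗[k] B →ₗ[k] B ⊗[k] A)

/-- `R1 ξ a x = (id ⊗ μA)(assoc((ξ ⊗ id)(assoc⁻¹(a ⊗ x))))`, i.e.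
on pure `x = c ⊗ d` it is `(id ⊗ mulRight d)(ξ(a ⊗ c))`. -/
noncomputable def R1 (a : A) : B ⊗[k] A →ₗ[k] B ⊗[k] A :=
  ((LinearMap.mul' k A).lTensor B)
    ∘ₗ (TensorProduct.assoc k B A A).toLinearMap
    ∘ₗ (ξ.rTensor A)
    ∘ₗ (TensorProduct.assoc k A B A).symm.toLinearMap
    ∘ₗ (TensorProduct.mk k A (B ⊗[k] A) a)

noncomputable def R2 (b : B) : B ⊗[k] A →ₗ[k] B ⊗[k] A :=
  ((LinearMap.mul' k B).rTensor A)
    ∘ₗ (TensorProduct.assoc k B B A).symm.toLinearMap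
    ∘ₗ (ξ.lTensor B)
    ∘ₗ (TensorProduct.assoc k B A B).toLinearMap
    ∘ₗ ((TensorProduct.mk k (B ⊗[k] A) B).flip b)

lemma R1_tmul (a : A) (c : B) (d : A) :
    R1 k ξ a (c ⊗ₜ[k] d)
      = TensorProduct.map LinearMap.id (LinearMap.mulRight k d) (ξ (a ⊗ₜ[k] c)) := by
  have h : ∀ y : B ⊗[k] A,
      ((LinearMap.mul' k A).lTensor B) ((TensorProduct.assoc k B A A) (y ⊗ₜ[k] d))
        = TensorProduct.map LinearMap.id (LinearMap.mulRight k d) y := by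
    intro y
    induction y using TensorProduct.induction_on with
    | zero => simp only [zero_tmul, tmul_zero, LinearEquiv.map_zero, LinearMap.map_zero]
    | tmul c' d' => simp [LinearMap.mul'_apply, LinearMap.mulRight_apply]
    | add u v hu hv => simp [add_tmul, hu, hv]
  simp only [R1, LinearMap.comp_apply, TensorProduct.mk_apply,
    LinearEquiv.coe_coe, TensorProduct.assoc_symm_tmul, LinearMap.rTensor_tmul]
  exact h (ξ (a ⊗ₜ[k] c))

lemma R2_tmul (b : B) (c : B) (d : A) :
    R2 k ξ b (c ⊗ₜ[k] d)
      = TensorProduct.map (LinearMap.mulLeft k c) LinearMap.id (ξ (d ⊗ₜ[k] b)) := by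
  have h : ∀ y : B ⊗[k] A,
      ((LinearMap.mul' k B).rTensor A) ((TensorProduct.assoc k B B A).symm (c ⊗ₜ[k] y))
        = TensorProduct.map (LinearMap.mulLeft k c) LinearMap.id y := by
    intro y
    induction y using TensorProduct.induction_on with
    | zero => simp only [zero_tmul, tmul_zero, LinearEquiv.map_zero, LinearMap.map_zero]
    | tmul c' d' => simp [LinearMap.mul'_apply, LinearMap.mulLeft_apply]
    | add u v hu hv => simp [tmul_add, hu, hv]
  simp only [R2, LinearMap.comp_apply, LinearMap.flip_apply, TensorProduct.mk_apply,
    LinearEquiv.coe_coe, TensorProduct.assoc_tmul, LinearMap.lTensor_tmul]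
  exact h (ξ (d ⊗ₜ[k] b))

lemma tm (b b' : B) (a a' : A) :
    twistMul k (LinearMap.mul' k B) (LinearMap.mul' k A) ξ
        ((b ⊗ₜ[k] a) ⊗ₜ[k] (b' ⊗ₜ[k] a'))
      = TensorProduct.map (LinearMap.mulLeft k b) (LinearMap.mulRight k a')
          (ξ (a ⊗ₜ[k] b')) := by
  have h : ∀ y : B ⊗[k] A,
      ((LinearMap.mul' k B).rTensor A) ((TensorProduct.assoc k B B A).symm
        (b ⊗ₜ[k] (((LinearMap.mul' k A).lTensor B)
          ((TensorProduct.assoc k B A A) (y ⊗ₜ[k] a')))))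
        = TensorProduct.map (LinearMap.mulLeft k b) (LinearMap.mulRight k a') y := by
    intro y
    induction y using TensorProduct.induction_on with
    | zero => simp only [zero_tmul, tmul_zero, LinearEquiv.map_zero, LinearMap.map_zero]
    | tmul c d => simp [LinearMap.mul'_apply]
    | add u v hu hv => simp [add_tmul, tmul_add, hu, hv]
  simp only [twistMul, LinearMap.comp_apply, LinearEquiv.coe_coe,
    TensorProduct.assoc_tmul, TensorProduct.assoc_symm_tmul,
    LinearMap.lTensor_tmul, LinearMap.rTensor_tmul]
  exact h (ξ (a ⊗ₜ[k] b'))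

end Aux

section Aux2

variable {A B : Type*} [Ring A] [Algebra k A] [Ring B] [Algebra k B]
  (ξ : A ⊗[k] B →ₗ[k] B ⊗[k] A)

lemma natFirst_iff :
    NatFirst k (LinearMap.mul' k A) ξ ↔
      ∀ (a₁ a₂ : A) (b : B), ξ ((a₁ * a₂) ⊗ₜ[k] b) = R1 k ξ a₁ (ξ (a₂ ⊗ₜ[k] b)) := by
  constructor
  · intro h a₁ a₂ b
    have := LinearMap.congr_fun h (a₁ ⊗ₜ[k] (a₂ ⊗ₜ[k] b))
    simpa [R1, LinearMap.mul'_apply] using this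
  · intro h
    apply TensorProduct.ext'
    intro a₁ y
    induction y using TensorProduct.induction_on with
    | zero => simp only [tmul_zero, LinearMap.map_zero]
    | tmul a₂ b => simpa [R1, LinearMap.mul'_apply] using h a₁ a₂ b
    | add u v hu hv => simp only [tmul_add, LinearMap.map_add, hu, hv]

lemma natSecond_iff :
    NatSecond k (LinearMap.mul' k B) ξ ↔
      ∀ (a : A) (b₁ b₂ : B), ξ (a ⊗ₜ[k] (b₁ * b₂)) = R2 k ξ b₂ (ξ (a ⊗ₜ[k] b₁)) := by
  constructor
  · intro h a b₁ b₂
    have := LinearMap.congr_fun h (a ⊗ₜ[k] (b₁ ⊗ₜ[k] b₂))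
    simpa [R2, LinearMap.mul'_apply] using this
  · intro h
    apply TensorProduct.ext'
    intro a y
    induction y using TensorProduct.induction_on with
    | zero => simp only [tmul_zero, LinearMap.map_zero]
    | tmul b₁ b₂ => simpa [R2, LinearMap.mul'_apply] using h a b₁ b₂
    | add u v hu hv => simp only [tmul_add, LinearMap.map_add, hu, hv]

end Aux2

section Aux3

variable {A B : Type*} [Ring A] [Algebra k A] [Ring B] [Algebra k B]
  (ξ : A ⊗[k] B →ₗ[k] B ⊗[k] A)

local notation "T" => twistMul k (LinearMap.mul' k B) (LinearMap.mul' k A) ξ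

lemma T_left (c : B) (d : A) (y : B ⊗[k] A) :
    T ((c ⊗ₜ[k] d) ⊗ₜ[k] y) = (LinearMap.mulLeft k c).rTensor A (R1 k ξ d y) := by
  induction y using TensorProduct.induction_on with
  | zero => simp only [tmul_zero, LinearMap.map_zero]
  | tmul c' d' =>
      rw [tm, R1_tmul,
        show TensorProduct.map LinearMap.id (LinearMap.mulRight k d')
            = (LinearMap.mulRight k d').lTensor B from rfl]
      exact (LinearMap.congr_fun
        (LinearMap.rTensor_comp_lTensor (f := LinearMap.mulLeft k c)
          (g := LinearMap.mulRight k d')) (ξ (d ⊗ₜ[k] c'))).symm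
  | add u v hu hv => simp only [tmul_add, LinearMap.map_add, hu, hv]

lemma T_right (c' : B) (d' : A) (x : B ⊗[k] A) :
    T (x ⊗ₜ[k] (c' ⊗ₜ[k] d')) = (LinearMap.mulRight k d').lTensor B (R2 k ξ c' x) := by
  induction x using TensorProduct.induction_on with
  | zero => simp only [zero_tmul, LinearMap.map_zero]
  | tmul c d =>
      rw [tm, R2_tmul,
        show TensorProduct.map (LinearMap.mulLeft k c) LinearMap.id
            = (LinearMap.mulLeft k c).rTensor A from rfl]
      exact (LinearMap.congr_fun
        (LinearMap.lTensor_comp_rTensor (f := LinearMap.mulLeft k c)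
          (g := LinearMap.mulRight k d')) (ξ (d ⊗ₜ[k] c'))).symm
  | add u v hu hv => simp only [add_tmul, LinearMap.map_add, hu, hv]

lemma linkA
    (hN1 : ∀ (a₁ a₂ : A) (b : B), ξ ((a₁ * a₂) ⊗ₜ[k] b) = R1 k ξ a₁ (ξ (a₂ ⊗ₜ[k] b)))
    (b b'' : B) (a' : A) (x : B ⊗[k] A) :
    R2 k ξ b'' (TensorProduct.map (LinearMap.mulLeft k b) (LinearMap.mulRight k a') x)
      = (LinearMap.mulLeft k b).rTensor A (T (x ⊗ₜ[k] ξ (a' ⊗ₜ[k] b''))) := by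
  induction x using TensorProduct.induction_on with
  | zero => simp only [LinearMap.map_zero, zero_tmul]
  | tmul c d =>
      rw [TensorProduct.map_tmul, R2_tmul]
      simp only [LinearMap.mulLeft_apply, LinearMap.mulRight_apply]
      rw [hN1 d a' b'', T_left, LinearMap.mulLeft_mul]
      exact LinearMap.congr_fun (LinearMap.rTensor_comp _ _ _) _
  | add u v hu hv => simp only [LinearMap.map_add, add_tmul, hu, hv]

lemma linkB
    (hN2 : ∀ (a : A) (b₁ b₂ : B), ξ (a ⊗ₜ[k] (b₁ * b₂)) = R2 k ξ b₂ (ξ (a ⊗ₜ[k] b₁)))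
    (b' : B) (a a'' : A) (y : B ⊗[k] A) :
    R1 k ξ a (TensorProduct.map (LinearMap.mulLeft k b') (LinearMap.mulRight k a'') y)
      = (LinearMap.mulRight k a'').lTensor B (T (ξ (a ⊗ₜ[k] b') ⊗ₜ[k] y)) := by
  induction y using TensorProduct.induction_on with
  | zero => simp only [LinearMap.map_zero, tmul_zero]
  | tmul c' d' =>
      rw [TensorProduct.map_tmul, R1_tmul]
      simp only [LinearMap.mulLeft_apply, LinearMap.mulRight_apply]
      rw [hN2 a b' c', T_right, LinearMap.mulRight_mul]
      exact LinearMap.congr_fun (LinearMap.lTensor_comp _ _ _) _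
  | add u v hu hv => simp only [LinearMap.map_add, tmul_add, hu, hv]

end Aux3

/-- The twisted tensor product multiplication on `B ⊗ A` is associative (with two-sided
unit `1_B ⊗ 1_A`) if and only if `ξ` is natural with respect to both multiplications. -/
theorem twisted_tensor_product_assoc_iff_natural
    (A B : Type*) [Ring A] [Algebra k A] [Ring B] [Algebra k B]
    (ξ : A ⊗[k] B →ₗ[k] B ⊗[k] A)
    (hξB : ∀ b : B, ξ ((1 : A) ⊗ₜ[k] b) = b ⊗ₜ[k] (1 : A))
    (hξA : ∀ a : A, ξ (a ⊗ₜ[k] (1 : B)) = (1 : B) ⊗ₜ[k] a) :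
    ((twistMul k (LinearMap.mul' k B) (LinearMap.mul' k A) ξ
          ∘ₗ (twistMul k (LinearMap.mul' k B) (LinearMap.mul' k A) ξ).rTensor (B ⊗[k] A)
        = twistMul k (LinearMap.mul' k B) (LinearMap.mul' k A) ξ
          ∘ₗ (twistMul k (LinearMap.mul' k B) (LinearMap.mul' k A) ξ).lTensor (B ⊗[k] A)
          ∘ₗ (TensorProduct.assoc k (B ⊗[k] A) (B ⊗[k] A) (B ⊗[k] A)).toLinearMap)
      ∧ (∀ x : B ⊗[k] A,
          twistMul k (LinearMap.mul' k B) (LinearMap.mul' k A) ξ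
            (((1 : B) ⊗ₜ[k] (1 : A)) ⊗ₜ[k] x) = x)
      ∧ (∀ x : B ⊗[k] A,
          twistMul k (LinearMap.mul' k B) (LinearMap.mul' k A) ξ
            (x ⊗ₜ[k] ((1 : B) ⊗ₜ[k] (1 : A))) = x))
    ↔ (NatFirst k (LinearMap.mul' k A) ξ ∧ NatSecond k (LinearMap.mul' k B) ξ) := by
  constructor
  · rintro ⟨hassoc, -, -⟩
    have hpt : ∀ u v w : B ⊗[k] A,
        twistMul k (LinearMap.mul' k B) (LinearMap.mul' k A) ξ
            (twistMul k (LinearMap.mul' k B) (LinearMap.mul' k A) ξ (u ⊗ₜ[k] v) ⊗ₜ[k] w)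
          = twistMul k (LinearMap.mul' k B) (LinearMap.mul' k A) ξ
            (u ⊗ₜ[k] twistMul k (LinearMap.mul' k B) (LinearMap.mul' k A) ξ (v ⊗ₜ[k] w)) := by
      intro u v w
      have h := LinearMap.congr_fun hassoc ((u ⊗ₜ[k] v) ⊗ₜ[k] w)
      simpa only [LinearMap.comp_apply, LinearMap.rTensor_tmul, LinearMap.lTensor_tmul,
        LinearEquiv.coe_coe, TensorProduct.assoc_tmul] using h
    refine ⟨(natFirst_iff k ξ).2 ?_, (natSecond_iff k ξ).2 ?_⟩
    · intro a₁ a₂ b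
      calc ξ ((a₁ * a₂) ⊗ₜ[k] b)
          = twistMul k (LinearMap.mul' k B) (LinearMap.mul' k A) ξ
              (((1 : B) ⊗ₜ[k] (a₁ * a₂)) ⊗ₜ[k] (b ⊗ₜ[k] (1 : A))) := by
            rw [tm]
            simp only [LinearMap.mulLeft_one, LinearMap.mulRight_one,
              TensorProduct.map_id, LinearMap.id_coe, id_eq]
        _ = twistMul k (LinearMap.mul' k B) (LinearMap.mul' k A) ξ
              ((twistMul k (LinearMap.mul' k B) (LinearMap.mul' k A) ξ
                (((1 : B) ⊗ₜ[k] a₁) ⊗ₜ[k] ((1 : B) ⊗ₜ[k] a₂))) ⊗ₜ[k] (b ⊗ₜ[k] (1 : A))) := by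
            rw [tm k ξ 1 1 a₁ a₂, hξA]
            simp only [TensorProduct.map_tmul, LinearMap.mulLeft_apply,
              LinearMap.mulRight_apply, one_mul]
        _ = twistMul k (LinearMap.mul' k B) (LinearMap.mul' k A) ξ
              (((1 : B) ⊗ₜ[k] a₁) ⊗ₜ[k] twistMul k (LinearMap.mul' k B) (LinearMap.mul' k A) ξ
                (((1 : B) ⊗ₜ[k] a₂) ⊗ₜ[k] (b ⊗ₜ[k] (1 : A)))) := hpt _ _ _
        _ = twistMul k (LinearMap.mul' k B) (LinearMap.mul' k A) ξ
              (((1 : B) ⊗ₜ[k] a₁) ⊗ₜ[k] ξ (a₂ ⊗ₜ[k] b)) := by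
            rw [tm]
            simp only [LinearMap.mulLeft_one, LinearMap.mulRight_one,
              TensorProduct.map_id, LinearMap.id_coe, id_eq]
        _ = R1 k ξ a₁ (ξ (a₂ ⊗ₜ[k] b)) := by
            rw [T_left]
            simp only [LinearMap.mulLeft_one, LinearMap.rTensor_id, LinearMap.id_coe, id_eq]
    · intro a b₁ b₂
      calc ξ (a ⊗ₜ[k] (b₁ * b₂))
          = twistMul k (LinearMap.mul' k B) (LinearMap.mul' k A) ξ
              (((1 : B) ⊗ₜ[k] a) ⊗ₜ[k] ((b₁ * b₂) ⊗ₜ[k] (1 : A))) := by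
            rw [tm]
            simp only [LinearMap.mulLeft_one, LinearMap.mulRight_one,
              TensorProduct.map_id, LinearMap.id_coe, id_eq]
        _ = twistMul k (LinearMap.mul' k B) (LinearMap.mul' k A) ξ
              (((1 : B) ⊗ₜ[k] a) ⊗ₜ[k] twistMul k (LinearMap.mul' k B) (LinearMap.mul' k A) ξ
                ((b₁ ⊗ₜ[k] (1 : A)) ⊗ₜ[k] (b₂ ⊗ₜ[k] (1 : A)))) := by
            rw [tm k ξ b₁ b₂ 1 1, hξB]
            simp only [TensorProduct.map_tmul, LinearMap.mulLeft_apply,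
              LinearMap.mulRight_apply, one_mul, mul_one]
        _ = twistMul k (LinearMap.mul' k B) (LinearMap.mul' k A) ξ
              ((twistMul k (LinearMap.mul' k B) (LinearMap.mul' k A) ξ
                (((1 : B) ⊗ₜ[k] a) ⊗ₜ[k] (b₁ ⊗ₜ[k] (1 : A)))) ⊗ₜ[k] (b₂ ⊗ₜ[k] (1 : A))) :=
            (hpt _ _ _).symm
        _ = twistMul k (LinearMap.mul' k B) (LinearMap.mul' k A) ξ
              (ξ (a ⊗ₜ[k] b₁) ⊗ₜ[k] (b₂ ⊗ₜ[k] (1 : A))) := by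
            rw [tm]
            simp only [LinearMap.mulLeft_one, LinearMap.mulRight_one,
              TensorProduct.map_id, LinearMap.id_coe, id_eq]
        _ = R2 k ξ b₂ (ξ (a ⊗ₜ[k] b₁)) := by
            rw [T_right]
            simp only [LinearMap.mulRight_one, LinearMap.lTensor_id, LinearMap.id_coe, id_eq]
  · rintro ⟨h1, h2⟩
    have hN1 := (natFirst_iff k ξ).1 h1
    have hN2 := (natSecond_iff k ξ).1 h2
    have hcore : ∀ (b b' b'' : B) (a a' a'' : A),
        twistMul k (LinearMap.mul' k B) (LinearMap.mul' k A) ξ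
            (twistMul k (LinearMap.mul' k B) (LinearMap.mul' k A) ξ
              ((b ⊗ₜ[k] a) ⊗ₜ[k] (b' ⊗ₜ[k] a')) ⊗ₜ[k] (b'' ⊗ₜ[k] a''))
          = twistMul k (LinearMap.mul' k B) (LinearMap.mul' k A) ξ
            ((b ⊗ₜ[k] a) ⊗ₜ[k] twistMul k (LinearMap.mul' k B) (LinearMap.mul' k A) ξ
              ((b' ⊗ₜ[k] a') ⊗ₜ[k] (b'' ⊗ₜ[k] a''))) := by
      intro b b' b'' a a' a''
      rw [tm k ξ b b' a a', tm k ξ b' b'' a' a'', T_right, T_left,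
        linkA k ξ hN1 b b'' a', linkB k ξ hN2 b' a a'']
      exact LinearMap.congr_fun
        ((LinearMap.lTensor_comp_rTensor (f := LinearMap.mulLeft k b)
            (g := LinearMap.mulRight k a'')).trans
          (LinearMap.rTensor_comp_lTensor (f := LinearMap.mulLeft k b)
            (g := LinearMap.mulRight k a'')).symm) _
    have hfull : ∀ u v w : B ⊗[k] A,
        twistMul k (LinearMap.mul' k B) (LinearMap.mul' k A) ξ
            (twistMul k (LinearMap.mul' k B) (LinearMap.mul' k A) ξ (u ⊗ₜ[k] v) ⊗ₜ[k] w)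
          = twistMul k (LinearMap.mul' k B) (LinearMap.mul' k A) ξ
            (u ⊗ₜ[k] twistMul k (LinearMap.mul' k B) (LinearMap.mul' k A) ξ (v ⊗ₜ[k] w)) := by
      intro u v w
      induction u using TensorProduct.induction_on with
      | zero => simp only [zero_tmul, LinearMap.map_zero]
      | add u₁ u₂ hu₁ hu₂ => simp only [add_tmul, LinearMap.map_add, hu₁, hu₂]
      | tmul b a =>
        induction v using TensorProduct.induction_on with
        | zero => simp only [zero_tmul, tmul_zero, LinearMap.map_zero]
        | add v₁ v₂ hv₁ hv₂ =>
            simp only [add_tmul, tmul_add, LinearMap.map_add, hv₁, hv₂]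
        | tmul b' a' =>
          induction w using TensorProduct.induction_on with
          | zero => simp only [tmul_zero, LinearMap.map_zero]
          | add w₁ w₂ hw₁ hw₂ =>
              simp only [tmul_add, LinearMap.map_add, hw₁, hw₂]
          | tmul b'' a'' => exact hcore b b' b'' a a' a''
    refine ⟨?_, ?_, ?_⟩
    · apply TensorProduct.ext'
      intro x w
      induction x using TensorProduct.induction_on with
      | zero => simp only [zero_tmul, LinearMap.map_zero]
      | add x₁ x₂ hx₁ hx₂ => simp only [add_tmul, LinearMap.map_add, hx₁, hx₂]
      | tmul u v =>
          simpa only [LinearMap.comp_apply, LinearMap.rTensor_tmul, LinearMap.lTensor_tmul,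
            LinearEquiv.coe_coe, TensorProduct.assoc_tmul] using hfull u v w
    · intro x
      induction x using TensorProduct.induction_on with
      | zero => simp only [tmul_zero, LinearMap.map_zero]
      | add x₁ x₂ hx₁ hx₂ => simp only [tmul_add, LinearMap.map_add, hx₁, hx₂]
      | tmul c d =>
          rw [tm, hξB]
          simp only [TensorProduct.map_tmul, LinearMap.mulLeft_apply,
            LinearMap.mulRight_apply, one_mul]
    · intro x
      induction x using TensorProduct.induction_on with
      | zero => simp only [zero_tmul, LinearMap.map_zero]
      | add x₁ x₂ hx₁ hx₂ => simp only [add_tmul, LinearMap.map_add, hx₁, hx₂]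
      | tmul c d =>
          rw [tm, hξA]
          simp only [TensorProduct.map_tmul, LinearMap.mulLeft_apply,
            LinearMap.mulRight_apply, one_mul, mul_one]
end

section
/- Let k be a field, A and B unital associative k-algebras, and ξ : A ⊗ B → B ⊗ A a linear map with ξ(1_A ⊗ b) = b ⊗ 1_A, ξ(a ⊗ 1_B) = 1_B ⊗ a, ξ∘(μ_A ⊗ id_B) = (id_B ⊗ μ_A)∘(ξ ⊗ id_A)∘(id_A ⊗ ξ) and ξ∘(id_A ⊗ μ_B) = (μ_B ⊗ id_A)∘(id_B ⊗ ξ)∘(ξ ⊗ id_B), so that the twisted tensor product B ⊗_ξ A is a unital associative algebra. Let M be a k-vector space with linear maps ρ_A : M ⊗ A → M and ρ_B : M ⊗ B → M that are unital associative right actions of A and of B respectively. Then the linear map ρ : M ⊗ (B ⊗ A) → M defined by ρ(m ⊗ b ⊗ a) = ρ_A(ρ_B(m ⊗ b) ⊗ a) is a unital associative right action of the algebra B ⊗_ξ A on M if and only if the compatibility condition ρ_B∘(ρ_A ⊗ id_B) = ρ_A∘(ρ_B ⊗ id_A)∘(id_M ⊗ ξ) holds as maps M ⊗ A ⊗ B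 → M. -/
open TensorProduct

variable (k : Type*) [Field k]

set_option maxHeartbeats 1000000 in
set_option synthInstance.maxHeartbeats 200000 in
/-- Given a twisting map `ξ : A ⊗ B → B ⊗ A` making `B ⊗_ξ A` a unital associative algebra,
and unital associative right actions `ρ_A`, `ρ_B` of `A` and `B` on `M`, the combined map
`ρ(m ⊗ b ⊗ a) = ρ_A(ρ_B(m ⊗ b) ⊗ a)` is a unital associative right action of `B ⊗_ξ A`
if and only if `ρ_B ∘ (ρ_A ⊗ id_B) = ρ_A ∘ (ρ_B ⊗ id_A) ∘ (id_M ⊗ ξ)`. -/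
theorem twisted_tensor_product_module_iff_compatible
    (A B M : Type*) [Ring A] [Algebra k A] [Ring B] [Algebra k B]
    [AddCommGroup M] [Module k M]
    (ξ : A ⊗[k] B →ₗ[k] B ⊗[k] A)
    (hξB : ∀ b : B, ξ ((1 : A) ⊗ₜ[k] b) = b ⊗ₜ[k] (1 : A))
    (hξA : ∀ a : A, ξ (a ⊗ₜ[k] (1 : B)) = (1 : B) ⊗ₜ[k] a)
    (hnatA : NatFirst k (LinearMap.mul' k A) ξ)
    (hnatB : NatSecond k (LinearMap.mul' k B) ξ)
    (ρA : M ⊗[k] A →ₗ[k] M) (ρB : M ⊗[k] B →ₗ[k] M)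
    (hρA1 : ∀ m : M, ρA (m ⊗ₜ[k] (1 : A)) = m)
    (hρAassoc : ρA ∘ₗ (ρA.rTensor A) ∘ₗ (TensorProduct.assoc k M A A).symm.toLinearMap
      = ρA ∘ₗ ((LinearMap.mul' k A).lTensor M))
    (hρB1 : ∀ m : M, ρB (m ⊗ₜ[k] (1 : B)) = m)
    (hρBassoc : ρB ∘ₗ (ρB.rTensor B) ∘ₗ (TensorProduct.assoc k M B B).symm.toLinearMap
      = ρB ∘ₗ ((LinearMap.mul' k B).lTensor M)) :
    (letI ρ : M ⊗[k] (B ⊗[k] A) →ₗ[k] M :=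
        ρA ∘ₗ (ρB.rTensor A) ∘ₗ (TensorProduct.assoc k M B A).symm.toLinearMap;
      (∀ m : M, ρ (m ⊗ₜ[k] ((1 : B) ⊗ₜ[k] (1 : A))) = m)
        ∧ ρ ∘ₗ (ρ.rTensor (B ⊗[k] A))
            ∘ₗ (TensorProduct.assoc k M (B ⊗[k] A) (B ⊗[k] A)).symm.toLinearMap
          = ρ ∘ₗ ((twistMul k (LinearMap.mul' k B) (LinearMap.mul' k A) ξ).lTensor M))
    ↔ (ρB ∘ₗ (ρA.rTensor B) ∘ₗ (TensorProduct.assoc k M A B).symm.toLinearMap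
        = ρA ∘ₗ (ρB.rTensor A) ∘ₗ (TensorProduct.assoc k M B A).symm.toLinearMap
            ∘ₗ (ξ.lTensor M)) := by
  have hAassoc : ∀ (m : M) (a a' : A), ρA (ρA (m ⊗ₜ[k] a) ⊗ₜ[k] a') = ρA (m ⊗ₜ[k] (a * a')) := by
    intro m a a'
    have := LinearMap.congr_fun hρAassoc (m ⊗ₜ[k] (a ⊗ₜ[k] a'))
    simpa using this
  have hBassoc : ∀ (m : M) (b b' : B), ρB (ρB (m ⊗ₜ[k] b) ⊗ₜ[k] b') = ρB (m ⊗ₜ[k] (b * b')) := by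
    intro m b b'
    have := LinearMap.congr_fun hρBassoc (m ⊗ₜ[k] (b ⊗ₜ[k] b'))
    simpa using this
  constructor
  · rintro ⟨hunit, hassoc⟩
    ext m a b
    have h := LinearMap.congr_fun hassoc (m ⊗ₜ[k] (((1 : B) ⊗ₜ[k] a) ⊗ₜ[k] (b ⊗ₜ[k] (1 : A))))
    have key : ∀ t : B ⊗[k] A,
        (LinearMap.rTensor A (LinearMap.mul' k B))
          ((TensorProduct.assoc k B B A).symm ((1 : B) ⊗ₜ[k]
            ((LinearMap.lTensor B (LinearMap.mul' k A))
              ((TensorProduct.assoc k B A A) (t ⊗ₜ[k] (1 : A)))))) = t := by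
      intro t
      induction t using TensorProduct.induction_on with
      | zero => simp only [zero_tmul, map_zero, tmul_zero]
      | tmul b' a' =>
          simp only [TensorProduct.assoc_tmul, LinearMap.lTensor_tmul, LinearMap.mul'_apply,
            TensorProduct.assoc_symm_tmul, LinearMap.rTensor_tmul, one_mul, mul_one,
            LinearEquiv.coe_coe]
      | add x y ihx ihy =>
          simp only [add_tmul, map_add, tmul_add] at *
          rw [ihx, ihy]
    simp only [twistMul, LinearMap.comp_apply, LinearMap.rTensor_tmul, LinearMap.lTensor_tmul,
      LinearEquiv.coe_coe, TensorProduct.assoc_tmul, TensorProduct.assoc_symm_tmul,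
      LinearMap.mul'_apply, hρA1, hρB1, key] at h
    simp only [TensorProduct.AlgebraTensorModule.curry_apply, TensorProduct.curry_apply,
      LinearMap.coe_restrictScalars, LinearMap.comp_apply, LinearMap.rTensor_tmul,
      LinearMap.lTensor_tmul, LinearEquiv.coe_coe, TensorProduct.assoc_tmul,
      TensorProduct.assoc_symm_tmul]
    exact h
  · intro hcomp
    have hc : ∀ (m : M) (a : A) (b : B),
        ρB (ρA (m ⊗ₜ[k] a) ⊗ₜ[k] b)
          = ρA ((LinearMap.rTensor A ρB)
              ((TensorProduct.assoc k M B A).symm (m ⊗ₜ[k] ξ (a ⊗ₜ[k] b)))) := by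
      intro m a b
      have := LinearMap.congr_fun hcomp (m ⊗ₜ[k] (a ⊗ₜ[k] b))
      simpa using this
    have hmain : ∀ (m : M) (b : B) (a : A) (b' : B) (a' : A),
        ρA (ρB (ρA (ρB (m ⊗ₜ[k] b) ⊗ₜ[k] a) ⊗ₜ[k] b') ⊗ₜ[k] a')
          = ρA ((LinearMap.rTensor A ρB) ((TensorProduct.assoc k M B A).symm (m ⊗ₜ[k]
              ((LinearMap.rTensor A (LinearMap.mul' k B))
                ((TensorProduct.assoc k B B A).symm (b ⊗ₜ[k]
                  ((LinearMap.lTensor B (LinearMap.mul' k A))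
                    ((TensorProduct.assoc k B A A) (ξ (a ⊗ₜ[k] b') ⊗ₜ[k] a'))))))))) := by
      intro m b a b' a'
      rw [hc]
      generalize ξ (a ⊗ₜ[k] b') = t
      induction t using TensorProduct.induction_on with
      | zero => simp only [zero_tmul, map_zero, tmul_zero]
      | tmul b1 a1 =>
          simp only [TensorProduct.assoc_tmul, TensorProduct.assoc_symm_tmul,
            LinearMap.rTensor_tmul, LinearMap.lTensor_tmul, LinearMap.mul'_apply,
            LinearEquiv.coe_coe, hAassoc, hBassoc]
      | add x y ihx ihy =>
          simp only [add_tmul, tmul_add, map_add] at *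
          rw [ihx, ihy]
    refine ⟨fun m => by simp [hρA1, hρB1], ?_⟩
    ext m b a b' a'
    simp only [TensorProduct.AlgebraTensorModule.curry_apply, TensorProduct.curry_apply,
      LinearMap.coe_restrictScalars, twistMul, LinearMap.comp_apply, LinearMap.rTensor_tmul,
      LinearMap.lTensor_tmul, LinearEquiv.coe_coe, TensorProduct.assoc_tmul,
      TensorProduct.assoc_symm_tmul]
    exact hmain m b a b' a'
end

section
/- Let k be a field, A and B unital associative k-algebras, and ξ : A ⊗ B → B ⊗ A a bijective linear map with ξ(1_A ⊗ b) = b ⊗ 1_A, ξ(a ⊗ 1_B) = 1_B ⊗ a, ξ∘(μ_A ⊗ id_B) = (id_B ⊗ μ_A)∘(ξ ⊗ id_A)∘(id_A ⊗ ξ) and ξ∘(id_A ⊗ μ_B) = (μ_B ⊗ id_A)∘(id_B ⊗ ξ)∘(ξ ⊗ id_B). Then the inverse map ξ⁻¹ : B ⊗ A → A ⊗ B satisfies the analogous conditions with the roles of A and B interchanged (so that the twisted tensor product A ⊗_{ξ⁻¹} B is also a unital associative algebra), and ξ⁻¹ is an algebra isomorphism from B ⊗_ξ A to A ⊗_{ξ⁻¹}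 B. -/
open TensorProduct

section helpers

variable {k : Type*} [Field k] {M N C D : Type*}
  [AddCommGroup M] [Module k M] [AddCommGroup N] [Module k N]
  [AddCommGroup C] [Module k C] [AddCommGroup D] [Module k D]

private lemma rT_cancel₁ (e : M ≃ₗ[k] N) (x : M ⊗[k] C) :
    e.symm.toLinearMap.rTensor C (e.toLinearMap.rTensor C x) = x := by
  induction x using TensorProduct.induction_on with
  | zero => simp
  | tmul m c => simp
  | add x y hx hy => simp [hx, hy]

private lemma rT_cancel₂ (e : M ≃ₗ[k] N) (x : N ⊗[k] C) :
    e.toLinearMap.rTensor C (e.symm.toLinearMap.rTensor C x) = x := by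
  induction x using TensorProduct.induction_on with
  | zero => simp
  | tmul m c => simp
  | add x y hx hy => simp [hx, hy]

private lemma lT_cancel₁ (e : M ≃ₗ[k] N) (x : C ⊗[k] M) :
    e.symm.toLinearMap.lTensor C (e.toLinearMap.lTensor C x) = x := by
  induction x using TensorProduct.induction_on with
  | zero => simp
  | tmul c m => simp
  | add x y hx hy => simp [hx, hy]

private lemma lT_cancel₂ (e : M ≃ₗ[k] N) (x : C ⊗[k] N) :
    e.toLinearMap.lTensor C (e.symm.toLinearMap.lTensor C x) = x := by
  induction x using TensorProduct.induction_on with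
  | zero => simp
  | tmul c m => simp
  | add x y hx hy => simp [hx, hy]

private lemma map_cancel (e : M ≃ₗ[k] N) (f : C ≃ₗ[k] D) (x : N ⊗[k] D) :
    TensorProduct.map e.toLinearMap f.toLinearMap
      (TensorProduct.map e.symm.toLinearMap f.symm.toLinearMap x) = x := by
  induction x using TensorProduct.induction_on with
  | zero => simp
  | tmul m c => simp
  | add x y hx hy => simp [hx, hy]

end helpers

variable (k : Type*) [Field k]

set_option maxHeartbeats 1000000 in
/-- If `ξ : A ⊗ B ≃ B ⊗ A` is a bijective twisting map for the algebras `A` and `B`, then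
`ξ⁻¹ : B ⊗ A → A ⊗ B` satisfies the analogous unit and naturality conditions with the roles of
`A` and `B` interchanged, and `ξ⁻¹` is an algebra isomorphism `B ⊗_ξ A → A ⊗_{ξ⁻¹} B`. -/
theorem inverse_twisting_map_and_algebra_iso
    (A B : Type*) [Ring A] [Algebra k A] [Ring B] [Algebra k B]
    (ξ : A ⊗[k] B ≃ₗ[k] B ⊗[k] A)
    (hξB : ∀ b : B, ξ ((1 : A) ⊗ₜ[k] b) = b ⊗ₜ[k] (1 : A))
    (hξA : ∀ a : A, ξ (a ⊗ₜ[k] (1 : B)) = (1 : B) ⊗ₜ[k] a)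
    (hnatA : NatFirst k (LinearMap.mul' k A) ξ.toLinearMap)
    (hnatB : NatSecond k (LinearMap.mul' k B) ξ.toLinearMap) :
    (∀ a : A, ξ.symm ((1 : B) ⊗ₜ[k] a) = a ⊗ₜ[k] (1 : B))
    ∧ (∀ b : B, ξ.symm (b ⊗ₜ[k] (1 : A)) = (1 : A) ⊗ₜ[k] b)
    ∧ NatFirst k (LinearMap.mul' k B) ξ.symm.toLinearMap
    ∧ NatSecond k (LinearMap.mul' k A) ξ.symm.toLinearMap
    ∧ ξ.symm ((1 : B) ⊗ₜ[k] (1 : A)) = (1 : A) ⊗ₜ[k] (1 : B)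
    ∧ ξ.symm.toLinearMap ∘ₗ twistMul k (LinearMap.mul' k B) (LinearMap.mul' k A) ξ.toLinearMap
      = twistMul k (LinearMap.mul' k A) (LinearMap.mul' k B) ξ.symm.toLinearMap
        ∘ₗ (TensorProduct.map ξ.symm.toLinearMap ξ.symm.toLinearMap) := by
  unfold NatFirst at hnatA
  unfold NatSecond at hnatB
  have hA : ∀ z : A ⊗[k] (A ⊗[k] B),
      ξ ((LinearMap.mul' k A).rTensor B ((TensorProduct.assoc k A A B).symm z))
        = (LinearMap.mul' k A).lTensor B ((TensorProduct.assoc k B A A)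
            (ξ.toLinearMap.rTensor A ((TensorProduct.assoc k A B A).symm
              (ξ.toLinearMap.lTensor A z)))) := by
    intro z
    simpa using LinearMap.congr_fun hnatA z
  have hB : ∀ z : A ⊗[k] (B ⊗[k] B),
      ξ ((LinearMap.mul' k B).lTensor A z)
        = (LinearMap.mul' k B).rTensor A ((TensorProduct.assoc k B B A).symm
            (ξ.toLinearMap.lTensor B ((TensorProduct.assoc k B A B)
              (ξ.toLinearMap.rTensor B ((TensorProduct.assoc k A B B).symm z))))) := by
    intro z
    simpa using LinearMap.congr_fun hnatB z
  refine ⟨fun a => ?_, fun b => ?_, ?_, ?_, ?_, ?_⟩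
  · rw [LinearEquiv.symm_apply_eq, hξA]
  · rw [LinearEquiv.symm_apply_eq, hξB]
  · -- NatFirst for ξ.symm with μB
    unfold NatFirst
    apply LinearMap.ext; intro x
    simp only [LinearMap.comp_apply, LinearEquiv.coe_coe]
    apply ξ.injective
    rw [LinearEquiv.apply_symm_apply, hB]
    simp [rT_cancel₂, lT_cancel₂, rT_cancel₁, lT_cancel₁]
  · -- NatSecond for ξ.symm with μA
    unfold NatSecond
    apply LinearMap.ext; intro x
    simp only [LinearMap.comp_apply, LinearEquiv.coe_coe]
    apply ξ.injective
    rw [LinearEquiv.apply_symm_apply, hA]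
    simp [rT_cancel₂, lT_cancel₂, rT_cancel₁, lT_cancel₁]
  · rw [LinearEquiv.symm_apply_eq, hξA]
  · -- the algebra isomorphism property
    have hB' : ∀ (a : A) (b c : B),
        ξ (a ⊗ₜ[k] (b * c))
          = (LinearMap.mul' k B).rTensor A ((TensorProduct.assoc k B B A).symm
              (ξ.toLinearMap.lTensor B ((TensorProduct.assoc k B A B)
                ((ξ (a ⊗ₜ[k] b)) ⊗ₜ[k] c)))) := by
      intro a b c
      simpa using hB (a ⊗ₜ[k] (b ⊗ₜ[k] c))
    have K : ξ.toLinearMap ∘ₗ twistMul k (LinearMap.mul' k A) (LinearMap.mul' k B)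
          ξ.symm.toLinearMap
        = twistMul k (LinearMap.mul' k B) (LinearMap.mul' k A) ξ.toLinearMap
            ∘ₗ (TensorProduct.map ξ.toLinearMap ξ.toLinearMap) := by
      apply TensorProduct.ext_fourfold'
      intro a b a' b'
      simp only [LinearMap.comp_apply, map_tmul, twistMul, LinearEquiv.coe_coe,
        assoc_tmul, assoc_symm_tmul, LinearMap.lTensor_tmul, LinearMap.rTensor_tmul]
      rw [hA]
      simp only [LinearMap.lTensor_tmul, LinearEquiv.coe_coe]
      rw [hB]
      simp only [LinearEquiv.symm_apply_apply, LinearMap.rTensor_tmul,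
        LinearEquiv.coe_coe, LinearEquiv.apply_symm_apply, assoc_tmul, assoc_symm_tmul,
        LinearMap.lTensor_tmul]
      generalize ξ (a' ⊗ₜ[k] b') = w
      induction w using TensorProduct.induction_on with
      | zero => simp only [tmul_zero, zero_tmul, LinearMap.map_zero, LinearEquiv.map_zero]
      | add x y hx hy =>
        simp only [tmul_add, add_tmul, LinearMap.map_add, LinearEquiv.map_add, hx, hy]
      | tmul w₁ w₂ =>
        simp only [assoc_symm_tmul, LinearMap.rTensor_tmul, LinearMap.mul'_apply,
          assoc_tmul, LinearMap.lTensor_tmul, LinearEquiv.coe_coe]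
        rw [hB']
        generalize ξ (a ⊗ₜ[k] b) = v
        induction v using TensorProduct.induction_on with
        | zero => simp only [tmul_zero, zero_tmul, LinearMap.map_zero, LinearEquiv.map_zero]
        | add x y hx hy =>
          simp only [tmul_add, add_tmul, LinearMap.map_add, LinearEquiv.map_add, hx, hy]
        | tmul v₁ v₂ =>
          simp only [assoc_tmul, assoc_symm_tmul, LinearMap.lTensor_tmul,
            LinearMap.rTensor_tmul, LinearMap.comp_apply, LinearEquiv.coe_coe]
          generalize ξ (v₂ ⊗ₜ[k] w₁) = t
          induction t using TensorProduct.induction_on with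
          | zero => simp only [tmul_zero, zero_tmul, LinearMap.map_zero, LinearEquiv.map_zero]
          | add x y hx hy =>
            simp only [tmul_add, add_tmul, LinearMap.map_add, LinearEquiv.map_add, hx, hy]
          | tmul t₁ t₂ =>
            simp [LinearMap.mul'_apply]
    apply LinearMap.ext; intro x
    simp only [LinearMap.comp_apply, LinearEquiv.coe_coe]
    apply ξ.injective
    rw [LinearEquiv.apply_symm_apply]
    have := LinearMap.congr_fun K
      (TensorProduct.map ξ.symm.toLinearMap ξ.symm.toLinearMap x)
    simp only [LinearMap.comp_apply, LinearEquiv.coe_coe, map_cancel] at this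
    rw [this]
end
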